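/- Let (Ω, μ) be a probability space and let X : Fin n → Ω → ℝ be measurable random variables that are independent (ProbabilityTheory.iIndepFun) with Measure.map (X i) μ = ProbabilityTheory.gaussianReal 0 1 for every i (standard Gaussians). Let a : Fin n → ℝ, let S be a subset (Finset) of Fin n, and set Σ₁ := Σ_{i ∈ S} a_i² and Σ₂ := Σ_{i ∉ S} a_i². Then for every natural number q ≥ 2, ∫ ( √(Σ_{i ∈ S} a_i² · (X i ω)²) · √(Σ_{i ∉ S} a_i² · (X i ω)²) )^q dμ(ω) ≤ q! · (2 · √(Σ₁ · Σ₂))^q. -/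

import Mathlib

open MeasureTheory ProbabilityTheory

open Real Asymptotics Filter
open scoped ENNReal NNReal

lemma integrable_pow_mul_exp (m : ℕ) :
    Integrable (fun x : ℝ => x ^ m * Real.exp (-x ^ 2 / 2)) := by
  have h := integrable_rpow_mul_exp_neg_mul_sq (b := (1:ℝ)/2) (by norm_num)
    (s := (m:ℝ)) (by exact_mod_cast neg_one_lt_zero.trans_le (Nat.cast_nonneg m))
  simp only [Real.rpow_natCast] at h
  convert h using 2 with x
  ring_nf

lemma tendsto_pow_mul_exp_atTop (m : ℕ) :
    Tendsto (fun x : ℝ => x ^ m * Real.exp (-x ^ 2 / 2)) atTop (nhds 0) := by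
  have h := rpow_mul_exp_neg_mul_sq_isLittleO_exp_neg (b := (1:ℝ)/2) (by norm_num) (m:ℝ)
  simp only [Real.rpow_natCast] at h
  have h2 : Tendsto (fun x : ℝ => rexp (-(1/2) * x)) atTop (nhds 0) :=
    Real.tendsto_exp_atBot.comp
      ((tendsto_const_mul_atBot_of_neg (by norm_num : (-(1/2):ℝ) < 0)).mpr tendsto_id)
  have := h.trans_tendsto h2
  convert this using 2 with x
  ring_nf

lemma tendsto_pow_mul_exp_atBot (m : ℕ) :
    Tendsto (fun x : ℝ => x ^ m * Real.exp (-x ^ 2 / 2)) atBot (nhds 0) := by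
  have h := (tendsto_pow_mul_exp_atTop m).comp tendsto_neg_atBot_atTop
  have heq : (fun x : ℝ => (-x) ^ m * Real.exp (-(-x) ^ 2 / 2))
      = fun x : ℝ => (-1:ℝ)^m * (x ^ m * Real.exp (-x ^ 2 / 2)) := by
    funext x; rw [neg_pow]; ring_nf
  rw [Function.comp_def] at h
  simp only [heq] at h
  have := h.const_mul ((-1:ℝ)^m)
  simpa [← mul_assoc, ← mul_pow] using this

lemma gauss_rec (m : ℕ) :
    ∫ x : ℝ, x ^ (m + 2) * Real.exp (-x ^ 2 / 2)
      = (m + 1 : ℝ) * ∫ x : ℝ, x ^ m * Real.exp (-x ^ 2 / 2) := by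
  set f : ℝ → ℝ := fun x => -(x ^ (m+1) * Real.exp (-x ^ 2 / 2)) with hf
  set f' : ℝ → ℝ := fun x =>
    x ^ (m + 2) * Real.exp (-x ^ 2 / 2) - (m+1 : ℝ) * (x ^ m * Real.exp (-x ^ 2 / 2)) with hf'
  have hderiv : ∀ x, HasDerivAt f (f' x) x := by
    intro x
    have h1 : HasDerivAt (fun x : ℝ => x ^ (m+1)) ((m+1 : ℝ) * x ^ m) x := by
      simpa using hasDerivAt_pow (m+1) x
    have hinner : HasDerivAt (fun x : ℝ => -x ^ 2 / 2) (-x) x := by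
      have h := ((hasDerivAt_pow 2 x).neg.div_const 2)
      refine h.congr_deriv ?_
      ring
    have hv : HasDerivAt (fun x : ℝ => Real.exp (-x ^ 2 / 2))
        (Real.exp (-x ^ 2 / 2) * (-x)) x := hinner.exp
    have h := (h1.mul hv).neg
    refine h.congr_deriv ?_
    simp only [hf']
    ring
  have hint : Integrable f' :=
    (integrable_pow_mul_exp (m+2)).sub ((integrable_pow_mul_exp m).const_mul _)
  have hbot : Tendsto f atBot (nhds 0) := by
    simpa using (tendsto_pow_mul_exp_atBot (m+1)).neg
  have htop : Tendsto f atTop (nhds 0) := by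
    simpa using (tendsto_pow_mul_exp_atTop (m+1)).neg
  have h0 := integral_of_hasDerivAt_of_tendsto hderiv hint hbot htop
  rw [sub_zero] at h0
  rw [hf'] at h0
  rw [integral_sub (integrable_pow_mul_exp (m+2))
    ((integrable_pow_mul_exp m).const_mul _), integral_const_mul] at h0
  linarith

lemma gaussianReal_std_eq :
    gaussianReal 0 1 = volume.withDensity
      (fun x => ((gaussianPDFReal 0 1 x).toNNReal : ℝ≥0∞)) := by
  rw [gaussianReal_of_var_ne_zero 0 one_ne_zero]
  rfl

lemma pdfReal_std (x : ℝ) :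
    gaussianPDFReal 0 1 x = (Real.sqrt (2 * π))⁻¹ * Real.exp (-x ^ 2 / 2) := by
  simp [gaussianPDFReal]

lemma gaussian_integral_eq (g : ℝ → ℝ) :
    ∫ x, g x ∂(gaussianReal 0 1)
      = (Real.sqrt (2 * π))⁻¹ * ∫ x, Real.exp (-x ^ 2 / 2) * g x := by
  rw [gaussianReal_std_eq,
    integral_withDensity_eq_integral_smul ((measurable_gaussianPDFReal 0 1).real_toNNReal) g,
    ← integral_const_mul]
  congr 1 with x
  rw [NNReal.smul_def, Real.coe_toNNReal _ (gaussianPDFReal_nonneg 0 1 x), pdfReal_std, smul_eq_mul]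
  ring

lemma gaussian_integrable_pow (k : ℕ) :
    Integrable (fun x => x ^ k) (gaussianReal 0 1) := by
  rw [gaussianReal_std_eq,
    integrable_withDensity_iff_integrable_smul ((measurable_gaussianPDFReal 0 1).real_toNNReal)]
  have : (fun x : ℝ => ((gaussianPDFReal 0 1 x).toNNReal : ℝ≥0) • x ^ k)
      = fun x : ℝ => (Real.sqrt (2 * π))⁻¹ * (x ^ k * Real.exp (-x ^ 2 / 2)) := by
    funext x
    rw [NNReal.smul_def, Real.coe_toNNReal _ (gaussianPDFReal_nonneg 0 1 x), pdfReal_std, smul_eq_mul]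
    ring
  rw [this]
  exact (integrable_pow_mul_exp k).const_mul _

lemma gaussian_moment_rec (k : ℕ) :
    ∫ x, x ^ (2 * (k+1)) ∂(gaussianReal 0 1)
      = (2 * k + 1 : ℝ) * ∫ x, x ^ (2 * k) ∂(gaussianReal 0 1) := by
  rw [gaussian_integral_eq, gaussian_integral_eq]
  have h2 : 2 * (k + 1) = 2 * k + 2 := by ring
  rw [h2]
  have := gauss_rec (2 * k)
  simp only [mul_comm (Real.exp _)] at *
  rw [this]
  push_cast
  ring

lemma gaussian_moment_nonneg (k : ℕ) : 0 ≤ ∫ x, x ^ (2 * k) ∂(gaussianReal 0 1) :=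
  integral_nonneg fun x => by rw [pow_mul]; positivity

lemma gaussian_moment_bound (k : ℕ) :
    ∫ x, x ^ (2 * k) ∂(gaussianReal 0 1) ≤ (2:ℝ) ^ k * k.factorial := by
  induction k with
  | zero => simp
  | succ k ih =>
    rw [gaussian_moment_rec]
    have h1 : (2 * k + 1 : ℝ) ≤ 2 * (k + 1) := by push_cast; linarith
    calc (2 * k + 1 : ℝ) * ∫ x, x ^ (2 * k) ∂(gaussianReal 0 1)
        ≤ (2 * (k+1) : ℝ) * ((2:ℝ) ^ k * k.factorial) := by
          apply mul_le_mul h1 ih (gaussian_moment_nonneg k) (by positivity)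
      _ = (2:ℝ) ^ (k+1) * (k+1).factorial := by
          rw [Nat.factorial_succ]; push_cast; ring

set_option maxHeartbeats 1000000 in
/-- Moment bound for the product of the norms of the two projections of a Gaussian
random feature: for independent standard Gaussians `X i` and every `q ≥ 2`,
`E[(√(Σ_{i∈S} a_i² X_i²) · √(Σ_{i∉S} a_i² X_i²))^q] ≤ q! (2 √(Σ₁ Σ₂))^q`, where
`Σ₁ = Σ_{i∈S} a_i²` and `Σ₂ = Σ_{i∉S} a_i²`. -/
theorem gaussian_split_moment_bound {Ω : Type*} [MeasurableSpace Ω] (μ : Measure Ω)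
    [IsProbabilityMeasure μ] {n : ℕ} (X : Fin n → Ω → ℝ)
    (hXm : ∀ i, Measurable (X i))
    (hindep : iIndepFun X μ)
    (hgauss : ∀ i, Measure.map (X i) μ = gaussianReal 0 1)
    (a : Fin n → ℝ) (S : Finset (Fin n)) (q : ℕ) (hq : 2 ≤ q) :
    ∫ ω, (Real.sqrt (∑ i ∈ S, a i ^ 2 * X i ω ^ 2) *
            Real.sqrt (∑ i ∈ Sᶜ, a i ^ 2 * X i ω ^ 2)) ^ q ∂μ ≤
      (q.factorial : ℝ) *
        (2 * Real.sqrt ((∑ i ∈ S, a i ^ 2) * ∑ i ∈ Sᶜ, a i ^ 2)) ^ q := by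
  have hq0 : q ≠ 0 := by omega
  set Sig1 : ℝ := ∑ i ∈ S, a i ^ 2 with hSig1
  set Sig2 : ℝ := ∑ i ∈ Sᶜ, a i ^ 2 with hSig2
  have hSig1nn : 0 ≤ Sig1 := Finset.sum_nonneg fun i _ => sq_nonneg _
  have hSig2nn : 0 ≤ Sig2 := Finset.sum_nonneg fun i _ => sq_nonneg _
  have hRHSnn : 0 ≤ (q.factorial : ℝ) * (2 * Real.sqrt (Sig1 * Sig2)) ^ q := by positivity
  -- degenerate cases
  by_cases h1 : Sig1 = 0
  · have hz : ∀ i ∈ S, a i ^ 2 = 0 := by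
      intro i hi
      exact (Finset.sum_eq_zero_iff_of_nonneg (fun j _ => sq_nonneg (a j))).mp h1 i hi
    have : ∀ ω, (Real.sqrt (∑ i ∈ S, a i ^ 2 * X i ω ^ 2) *
        Real.sqrt (∑ i ∈ Sᶜ, a i ^ 2 * X i ω ^ 2)) ^ q = 0 := by
      intro ω
      have : (∑ i ∈ S, a i ^ 2 * X i ω ^ 2) = 0 :=
        Finset.sum_eq_zero fun i hi => by rw [hz i hi, zero_mul]
      rw [this, Real.sqrt_zero, zero_mul, zero_pow hq0]
    simp only [this, integral_zero]
    exact hRHSnn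
  by_cases h2 : Sig2 = 0
  · have hz : ∀ i ∈ Sᶜ, a i ^ 2 = 0 := by
      intro i hi
      exact (Finset.sum_eq_zero_iff_of_nonneg (fun j _ => sq_nonneg (a j))).mp h2 i hi
    have : ∀ ω, (Real.sqrt (∑ i ∈ S, a i ^ 2 * X i ω ^ 2) *
        Real.sqrt (∑ i ∈ Sᶜ, a i ^ 2 * X i ω ^ 2)) ^ q = 0 := by
      intro ω
      have : (∑ i ∈ Sᶜ, a i ^ 2 * X i ω ^ 2) = 0 :=
        Finset.sum_eq_zero fun i hi => by rw [hz i hi, zero_mul]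
      rw [this, Real.sqrt_zero, mul_zero, zero_pow hq0]
    simp only [this, integral_zero]
    exact hRHSnn
  -- main case
  have hSig1p : 0 < Sig1 := lt_of_le_of_ne hSig1nn (Ne.symm h1)
  have hSig2p : 0 < Sig2 := lt_of_le_of_ne hSig2nn (Ne.symm h2)
  set s1 := Real.sqrt Sig1 with hs1
  set s2 := Real.sqrt Sig2 with hs2
  have hs1p : 0 < s1 := Real.sqrt_pos.mpr hSig1p
  have hs2p : 0 < s2 := Real.sqrt_pos.mpr hSig2p
  have hs1sq : s1 ^ 2 = Sig1 := Real.sq_sqrt hSig1nn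
  have hs2sq : s2 ^ 2 = Sig2 := Real.sq_sqrt hSig2nn
  set t : ℝ := s2 / s1 with htdef
  have htp : 0 < t := div_pos hs2p hs1p
  set c : Fin n → ℝ := fun i => if i ∈ S then t * a i ^ 2 else a i ^ 2 / t with hcdef
  have hcnn : ∀ i, 0 ≤ c i := by
    intro i
    by_cases hi : i ∈ S <;> simp only [hcdef, hi, if_true, if_false] <;> positivity
  set C : ℝ := ∑ i, c i with hCdef
  have hsqrtmul : Real.sqrt (Sig1 * Sig2) = s1 * s2 := Real.sqrt_mul hSig1nn Sig2
  have hC : C = 2 * (s1 * s2) := by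
    rw [hCdef, ← Finset.sum_add_sum_compl S c]
    have e1 : ∑ i ∈ S, c i = t * Sig1 := by
      rw [hSig1, Finset.mul_sum]
      exact Finset.sum_congr rfl fun i hi => by simp [hcdef, hi]
    have e2 : ∑ i ∈ Sᶜ, c i = Sig2 / t := by
      rw [hSig2, Finset.sum_div]
      refine Finset.sum_congr rfl fun i hi => ?_
      have : i ∉ S := Finset.mem_compl.mp hi
      simp [hcdef, this]
    rw [e1, e2, htdef]
    field_simp
    nlinarith [hs1sq, hs2sq]
  have hCpos : 0 < C := by
    rw [hC]; exact mul_pos two_pos (mul_pos hs1p hs2p)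
  -- moments
  set M : ℝ := ∫ x, x ^ (2 * q) ∂(gaussianReal 0 1) with hMdef
  have hXint : ∀ i, Integrable (fun ω => X i ω ^ (2 * q)) μ := by
    intro i
    have h := gaussian_integrable_pow (2 * q)
    rw [← hgauss i] at h
    exact ((integrable_map_measure
      (measurable_id.pow_const (2*q)).aestronglyMeasurable
      (hXm i).aemeasurable).mp h)
  have hXval : ∀ i, ∫ ω, X i ω ^ (2 * q) ∂μ = M := by
    intro i
    rw [hMdef, ← hgauss i]
    exact (integral_map (hXm i).aemeasurable
      (measurable_id.pow_const (2*q)).aestronglyMeasurable).symm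
  -- pointwise bound
  set g : Ω → ℝ := fun ω => (1/2 : ℝ) ^ q * (C ^ (q - 1) * ∑ i, c i * X i ω ^ (2 * q))
    with hgdef
  have hpt : ∀ ω, (Real.sqrt (∑ i ∈ S, a i ^ 2 * X i ω ^ 2) *
      Real.sqrt (∑ i ∈ Sᶜ, a i ^ 2 * X i ω ^ 2)) ^ q ≤ g ω := by
    intro ω
    set A : ℝ := ∑ i ∈ S, a i ^ 2 * X i ω ^ 2 with hA
    set B : ℝ := ∑ i ∈ Sᶜ, a i ^ 2 * X i ω ^ 2 with hB
    have hAnn : 0 ≤ A := Finset.sum_nonneg fun i _ => by positivity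
    have hBnn : 0 ≤ B := Finset.sum_nonneg fun i _ => by positivity
    set Y : ℝ := ∑ i, c i * X i ω ^ 2 with hY
    have hYeq : Y = t * A + B / t := by
      rw [hY, ← Finset.sum_add_sum_compl S (fun i => c i * X i ω ^ 2), hA, hB,
        Finset.mul_sum, Finset.sum_div]
      congr 1
      · exact Finset.sum_congr rfl fun i hi => by simp [hcdef, hi]; ring
      · refine Finset.sum_congr rfl fun i hi => ?_
        have : i ∉ S := Finset.mem_compl.mp hi
        simp [hcdef, this]; ring
    -- step 1 : AM-GM
    have step1 : Real.sqrt A * Real.sqrt B ≤ Y / 2 := by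
      have h1 : Real.sqrt (t * A) * Real.sqrt (B / t) = Real.sqrt A * Real.sqrt B := by
        rw [← Real.sqrt_mul (mul_nonneg htp.le hAnn), ← Real.sqrt_mul hAnn]
        congr 1
        field_simp
      have h2 : Real.sqrt (t * A) * Real.sqrt (B / t) ≤ (t * A + B / t) / 2 := by
        nlinarith [sq_nonneg (Real.sqrt (t * A) - Real.sqrt (B / t)),
          Real.sq_sqrt (mul_nonneg htp.le hAnn),
          Real.sq_sqrt (div_nonneg hBnn htp.le),
          Real.sqrt_nonneg (t * A), Real.sqrt_nonneg (B / t)]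
      rw [← h1, hYeq]
      exact h2
    have hYnn : 0 ≤ Y := Finset.sum_nonneg fun i _ =>
      mul_nonneg (hcnn i) (sq_nonneg _)
    -- step 2 : power
    have step2 : (Real.sqrt A * Real.sqrt B) ^ q ≤ (Y / 2) ^ q :=
      pow_le_pow_left₀ (mul_nonneg (Real.sqrt_nonneg _) (Real.sqrt_nonneg _)) step1 q
    -- step 3 : Jensen
    have step3 : Y ^ q ≤ C ^ (q - 1) * ∑ i, c i * X i ω ^ (2 * q) := by
      have hw : ∀ i ∈ Finset.univ, 0 ≤ c i / C := fun i _ => div_nonneg (hcnn i) hCpos.le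
      have hw1 : ∑ i : Fin n, c i / C = 1 := by
        rw [← Finset.sum_div, ← hCdef, div_self hCpos.ne']
      have hmem : ∀ i ∈ Finset.univ, C * X i ω ^ 2 ∈ Set.Ici (0:ℝ) := fun i _ =>
        Set.mem_Ici.mpr (mul_nonneg hCpos.le (sq_nonneg _))
      have hJ := (convexOn_pow (𝕜 := ℝ) q).map_sum_le hw hw1 hmem
      have hL : ∑ i : Fin n, (c i / C) • (C * X i ω ^ 2) = Y := by
        rw [hY]
        refine Finset.sum_congr rfl fun i _ => ?_
        rw [smul_eq_mul]
        field_simp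
      have hR : ∑ i : Fin n, (c i / C) • (C * X i ω ^ 2) ^ q
          = C ^ (q - 1) * ∑ i, c i * X i ω ^ (2 * q) := by
        rw [Finset.mul_sum]
        refine Finset.sum_congr rfl fun i _ => ?_
        rw [smul_eq_mul, mul_pow, pow_mul]
        have : C ^ q = C * C ^ (q - 1) := by
          rw [← pow_succ']
          congr 1
          omega
        rw [this]
        field_simp
      rw [hL, hR] at hJ
      exact hJ
    calc (Real.sqrt A * Real.sqrt B) ^ q ≤ (Y / 2) ^ q := step2
      _ = (1/2 : ℝ) ^ q * Y ^ q := by rw [div_pow, one_div_pow]; ring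
      _ ≤ (1/2 : ℝ) ^ q * (C ^ (q - 1) * ∑ i, c i * X i ω ^ (2 * q)) := by
          exact mul_le_mul_of_nonneg_left step3 (by positivity)
      _ = g ω := rfl
  -- integrate
  have hgint : Integrable g μ := by
    refine Integrable.const_mul ?_ _
    refine Integrable.const_mul ?_ _
    exact integrable_finset_sum _ fun i _ => (hXint i).const_mul _
  have hmono := integral_mono_of_nonneg
    (ae_of_all μ fun ω => pow_nonneg
      (mul_nonneg (Real.sqrt_nonneg _) (Real.sqrt_nonneg _)) q) hgint (ae_of_all μ hpt)
  refine hmono.trans ?_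
  have hgval : ∫ ω, g ω ∂μ = (1/2 : ℝ) ^ q * (C ^ (q - 1) * (C * M)) := by
    rw [hgdef]
    simp only
    rw [integral_const_mul, integral_const_mul, integral_finset_sum _
      (fun i _ => (hXint i).const_mul _)]
    congr 2
    have : ∀ i ∈ Finset.univ, ∫ ω, c i * X i ω ^ (2 * q) ∂μ = c i * M := by
      intro i _
      rw [integral_const_mul, hXval i]
    rw [Finset.sum_congr rfl this, ← Finset.sum_mul, ← hCdef]
  rw [hgval]
  have hCq : C ^ (q - 1) * C = C ^ q := by
    rw [← pow_succ]
    congr 1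
    omega
  have hMb : M ≤ (2:ℝ) ^ q * q.factorial := gaussian_moment_bound q
  have key : (1/2 : ℝ) ^ q * (C ^ (q - 1) * (C * M))
      ≤ (1/2 : ℝ) ^ q * (C ^ q * ((2:ℝ) ^ q * q.factorial)) := by
    have h1 : C ^ (q - 1) * (C * M) = C ^ q * M := by rw [← mul_assoc, hCq]
    rw [h1]
    refine mul_le_mul_of_nonneg_left ?_ (by positivity)
    exact mul_le_mul_of_nonneg_left hMb (pow_nonneg hCpos.le q)
  refine key.trans ?_
  rw [hC, hsqrtmul]
  have : (1/2 : ℝ) ^ q * ((2 * (s1 * s2)) ^ q * ((2:ℝ) ^ q * q.factorial))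
      = (q.factorial : ℝ) * (2 * (s1 * s2)) ^ q := by
    have h12 : (1/2:ℝ)^q * (2:ℝ)^q = 1 := by
      rw [← mul_pow]; norm_num
    calc (1/2 : ℝ) ^ q * ((2 * (s1 * s2)) ^ q * ((2:ℝ) ^ q * q.factorial))
        = ((1/2:ℝ)^q * (2:ℝ)^q) * ((2 * (s1 * s2)) ^ q * q.factorial) := by ring
      _ = (q.factorial : ℝ) * (2 * (s1 * s2)) ^ q := by rw [h12]; ring
  rw [this]
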